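/- Let μ, ν be probability measures on ℝ^d with finite second moments. Then for every R > 0, W₂(μ,ν)² ≤ 8 R² ‖μ - ν‖_{TV} + 4 ∫_{‖u‖>R} ‖u‖² dμ(u) + 4 ∫_{‖v‖>R} ‖v‖² dν(v), where W₂ is the 2-Wasserstein distance and ‖·‖_{TV} the total variation distance. -/

import Mathlib

open MeasureTheory ENNReal

/-- Total variation distance: supremum over measurable sets of the difference
of the measures. -/
noncomputable def tvDist {α : Type*} [MeasurableSpace α]
    (μ ν : Measure α) : ℝ :=
  ⨆ A : {s : Set α // MeasurableSet s}, |(μ A).toReal - (ν A).toReal|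

/-- Squared 2-Wasserstein distance, as infimum over couplings of the expected
squared distance. -/
noncomputable def W2sq {d : ℕ}
    (μ ν : Measure (EuclideanSpace ℝ (Fin d))) : ℝ :=
  sInf {r : ℝ |
    ∃ π : Measure (EuclideanSpace ℝ (Fin d) × EuclideanSpace ℝ (Fin d)),
      π.map Prod.fst = μ ∧ π.map Prod.snd = ν ∧
      r = ∫ p, ‖p.1 - p.2‖^2 ∂π}

section aux

variable {d : ℕ}

lemma aux_tv_bound (μ ν : Measure (EuclideanSpace ℝ (Fin d)))
    [IsProbabilityMeasure μ] [IsProbabilityMeasure ν]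
    {t : Set (EuclideanSpace ℝ (Fin d))} (ht : MeasurableSet t) :
    |(μ t).toReal - (ν t).toReal| ≤ tvDist μ ν := by
  have hbdd : BddAbove (Set.range fun A : {s : Set (EuclideanSpace ℝ (Fin d)) // MeasurableSet s}
      => |(μ A).toReal - (ν A).toReal|) := by
    refine ⟨1, ?_⟩
    rintro x ⟨A, rfl⟩
    have h1 : (μ ↑A).toReal ≤ 1 := by
      have := ENNReal.toReal_mono (by simp) (prob_le_one (μ := μ) (s := A))
      simpa using this
    have h2 : (ν ↑A).toReal ≤ 1 := by
      have := ENNReal.toReal_mono (by simp) (prob_le_one (μ := ν) (s := A))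
      simpa using this
    have h3 : 0 ≤ (μ ↑A).toReal := ENNReal.toReal_nonneg
    have h4 : 0 ≤ (ν ↑A).toReal := ENNReal.toReal_nonneg
    rw [abs_sub_le_iff]
    constructor <;> linarith
  exact le_ciSup hbdd ⟨t, ht⟩

lemma aux_tv_nonneg (μ ν : Measure (EuclideanSpace ℝ (Fin d)))
    [IsProbabilityMeasure μ] [IsProbabilityMeasure ν] :
    0 ≤ tvDist μ ν := by
  have h := aux_tv_bound μ ν MeasurableSet.empty
  simpa using h

lemma aux_W2_le (μ ν : Measure (EuclideanSpace ℝ (Fin d)))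
    (π : Measure (EuclideanSpace ℝ (Fin d) × EuclideanSpace ℝ (Fin d)))
    (h1 : π.map Prod.fst = μ) (h2 : π.map Prod.snd = ν) :
    W2sq μ ν ≤ ∫ p, ‖p.1 - p.2‖^2 ∂π := by
  apply csInf_le
  · refine ⟨0, ?_⟩
    rintro r ⟨π', -, -, rfl⟩
    exact integral_nonneg fun p => by positivity
  · exact ⟨π, h1, h2, rfl⟩

end aux

set_option maxHeartbeats 1600000 in
/-- Truncation bound: for probability measures with finite second moments,
`W₂(μ,ν)² ≤ 8R²‖μ-ν‖_TV + 4∫_{‖u‖>R}‖u‖²dμ + 4∫_{‖v‖>R}‖v‖²dν`. -/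
theorem stmt13 {d : ℕ} (μ ν : Measure (EuclideanSpace ℝ (Fin d)))
    [IsProbabilityMeasure μ] [IsProbabilityMeasure ν]
    (hμ : Integrable (fun u => ‖u‖^2) μ)
    (hν : Integrable (fun v => ‖v‖^2) ν) :
    ∀ R > (0:ℝ),
      W2sq μ ν ≤ 8 * R^2 * tvDist μ ν
        + 4 * ∫ u in {u : EuclideanSpace ℝ (Fin d) | R < ‖u‖}, ‖u‖^2 ∂μ
        + 4 * ∫ v in {v : EuclideanSpace ℝ (Fin d) | R < ‖v‖}, ‖v‖^2 ∂ν := by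
  intro R hR
  classical
  set E := EuclideanSpace ℝ (Fin d)
  obtain ⟨s, hs, hs₁, hs₂⟩ := hahn_decomposition (μ := μ) (ν := ν)
  set A : Set E := {u : E | R < ‖u‖} with hA
  have hAmeas : MeasurableSet A := measurableSet_lt measurable_const measurable_norm
  set h₁ : E → ℝ := A.indicator (fun u => ‖u‖^2) with hh₁
  -- nonnegativity of the tail integrals
  have hIμ_nonneg : 0 ≤ ∫ u in A, ‖u‖^2 ∂μ :=
    setIntegral_nonneg hAmeas fun u _ => by positivity
  have hIν_nonneg : 0 ≤ ∫ v in A, ‖v‖^2 ∂ν :=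
    setIntegral_nonneg hAmeas fun v _ => by positivity
  have htv0 : 0 ≤ tvDist μ ν := aux_tv_nonneg μ ν
  -- measure comparisons on s, sᶜ
  have hle1 : ν.restrict s ≤ μ.restrict s := by
    refine Measure.le_iff.2 fun t ht => ?_
    rw [Measure.restrict_apply ht, Measure.restrict_apply ht]
    exact hs₁ _ (ht.inter hs) Set.inter_subset_right
  have hle2 : μ.restrict sᶜ ≤ ν.restrict sᶜ := by
    refine Measure.le_iff.2 fun t ht => ?_
    rw [Measure.restrict_apply ht, Measure.restrict_apply ht]
    exact hs₂ _ (ht.inter hs.compl) Set.inter_subset_right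
  set ρμ : Measure E := μ.restrict s - ν.restrict s with hρμ
  set ρν : Measure E := ν.restrict sᶜ - μ.restrict sᶜ with hρν
  set lam : Measure E := ν.restrict s + μ.restrict sᶜ with hlam
  have hρμ_le : ρμ ≤ μ := le_trans Measure.sub_le (Measure.restrict_le_self)
  have hρν_le : ρν ≤ ν := le_trans Measure.sub_le (Measure.restrict_le_self)
  haveI : IsFiniteMeasure ρμ := isFiniteMeasure_of_le μ hρμ_le
  haveI : IsFiniteMeasure ρν := isFiniteMeasure_of_le ν hρν_le
  have hνs_le : ν s ≤ μ s := hs₁ s hs subset_rfl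
  set β : ℝ≥0∞ := μ s - ν s with hβ
  have hβ_top : β ≠ ⊤ := by
    have : β ≤ μ s := tsub_le_self
    exact ne_top_of_le_ne_top (measure_ne_top μ s) this
  have hmassμ : ρμ Set.univ = β := by
    rw [hρμ, Measure.sub_apply MeasurableSet.univ hle1,
      Measure.restrict_apply_univ, Measure.restrict_apply_univ]
  have hmassν : ρν Set.univ = β := by
    rw [hρν, Measure.sub_apply MeasurableSet.univ hle2,
      Measure.restrict_apply_univ, Measure.restrict_apply_univ]
    have hμc : μ sᶜ = 1 - μ s := by
      rw [measure_compl hs (measure_ne_top μ s), measure_univ]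
    have hνc : ν sᶜ = 1 - ν s := by
      rw [measure_compl hs (measure_ne_top ν s), measure_univ]
    rw [hμc, hνc, hβ]
    have hμ1 : μ s ≤ 1 := prob_le_one
    have hν1 : ν s ≤ 1 := prob_le_one
    have hle' : (1:ℝ≥0∞) - μ s ≤ 1 - ν s := tsub_le_tsub_left hνs_le 1
    refine (ENNReal.toReal_eq_toReal_iff' ?_ ?_).1 ?_
    · exact ne_top_of_le_ne_top (by simp) tsub_le_self
    · exact ne_top_of_le_ne_top (measure_ne_top μ s) tsub_le_self
    · rw [ENNReal.toReal_sub_of_le hle' (by simp),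
        ENNReal.toReal_sub_of_le hν1 (by simp),
        ENNReal.toReal_sub_of_le hμ1 (by simp),
        ENNReal.toReal_sub_of_le hνs_le (measure_ne_top μ s)]
      ring
  -- combine lam with remainders
  have hlamμ : lam + ρμ = μ := by
    have key : ρμ + ν.restrict s = μ.restrict s := Measure.sub_add_cancel_of_le hle1
    have hre : lam + ρμ = ρμ + ν.restrict s + μ.restrict sᶜ := by rw [hlam]; abel
    rw [hre, key, Measure.restrict_add_restrict_compl hs]
  have hlamν : lam + ρν = ν := by
    have key : ρν + μ.restrict sᶜ = ν.restrict sᶜ := Measure.sub_add_cancel_of_le hle2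
    have hre : lam + ρν = ν.restrict s + (ρν + μ.restrict sᶜ) := by rw [hlam]; abel
    rw [hre, key, Measure.restrict_add_restrict_compl hs]
  -- the coupling
  set diag : E → E × E := fun x => (x, x) with hdiagdef
  have hdiag : Measurable diag := measurable_id.prodMk measurable_id
  set π₁ : Measure (E × E) := lam.map diag with hπ₁
  set π₂ : Measure (E × E) := β⁻¹ • (ρμ.prod ρν) with hπ₂
  set π : Measure (E × E) := π₁ + π₂ with hπdef
  -- marginals
  have hsmulμ : (β⁻¹ * β) • ρμ = ρμ := by
    by_cases hβ0 : β = 0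
    · have : ρμ = 0 := Measure.measure_univ_eq_zero.1 (by rw [hmassμ, hβ0])
      simp [this]
    · rw [ENNReal.inv_mul_cancel hβ0 hβ_top, one_smul]
  have hsmulν : (β⁻¹ * β) • ρν = ρν := by
    by_cases hβ0 : β = 0
    · have : ρν = 0 := Measure.measure_univ_eq_zero.1 (by rw [hmassν, hβ0])
      simp [this]
    · rw [ENNReal.inv_mul_cancel hβ0 hβ_top, one_smul]
  have hmarg1 : π.map Prod.fst = μ := by
    rw [hπdef, Measure.map_add _ _ measurable_fst, hπ₁,
      Measure.map_map measurable_fst hdiag]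
    have h1 : (Prod.fst ∘ diag : E → E) = id := rfl
    rw [h1, Measure.map_id, hπ₂, Measure.map_smul, Measure.map_fst_prod,
      hmassν, smul_smul, hsmulμ, hlamμ]
  have hmarg2 : π.map Prod.snd = ν := by
    rw [hπdef, Measure.map_add _ _ measurable_snd, hπ₁,
      Measure.map_map measurable_snd hdiag]
    have h1 : (Prod.snd ∘ diag : E → E) = id := rfl
    rw [h1, Measure.map_id, hπ₂, Measure.map_smul, Measure.map_snd_prod,
      hmassμ, smul_smul, hsmulν, hlamν]
  -- the cost function
  set f : E × E → ℝ := fun p => ‖p.1 - p.2‖^2 with hf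
  have hf_cont : Continuous f := (continuous_fst.sub continuous_snd).norm.pow 2
  -- integral over π₁ vanishes
  have hπ₁_int : Integrable f π₁ := by
    rw [hπ₁]
    refine (integrable_map_measure hf_cont.aestronglyMeasurable hdiag.aemeasurable).2 ?_
    have : (f ∘ diag) = fun _ : E => (0:ℝ) := by
      funext x; simp [hf, hdiagdef]
    rw [this]
    exact integrable_const 0
  have hπ₁_eq : ∫ p, f p ∂π₁ = 0 := by
    rw [hπ₁, integral_map hdiag.aemeasurable hf_cont.aestronglyMeasurable]
    simp [hf, hdiagdef]
  -- integrability over the product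
  have hμρ : Integrable (fun u : E => ‖u‖^2) ρμ := hμ.mono_measure hρμ_le
  have hνρ : Integrable (fun v : E => ‖v‖^2) ρν := hν.mono_measure hρν_le
  have hg_int : Integrable (fun p : E × E => 2*‖p.1‖^2 + 2*‖p.2‖^2) (ρμ.prod ρν) := by
    have hx : Integrable (fun z : E × E => (2*‖z.1‖^2) * (1:ℝ)) (ρμ.prod ρν) :=
      (hμρ.const_mul 2).mul_prod (integrable_const 1)
    have hy : Integrable (fun z : E × E => (1:ℝ) * (2*‖z.2‖^2)) (ρμ.prod ρν) :=
      (integrable_const 1).mul_prod (hνρ.const_mul 2)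
    have hxy := hx.add hy
    simp only [mul_one, one_mul] at hxy
    exact hxy
  have hf_prod_int : Integrable f (ρμ.prod ρν) := by
    refine hg_int.mono' hf_cont.aestronglyMeasurable ?_
    filter_upwards with p
    have h1 : ‖p.1 - p.2‖ ≤ ‖p.1‖ + ‖p.2‖ := norm_sub_le _ _
    have h2 : 0 ≤ ‖p.1 - p.2‖ := norm_nonneg _
    have h3 : 0 ≤ ‖p.1‖ := norm_nonneg _
    have h4 : 0 ≤ ‖p.2‖ := norm_nonneg _
    have hfp : ‖f p‖ = ‖p.1 - p.2‖^2 := by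
      simp only [hf, Real.norm_eq_abs]
      exact abs_of_nonneg (by positivity)
    rw [hfp]
    nlinarith [pow_le_pow_left₀ h2 h1 2, sq_nonneg (‖p.1‖ - ‖p.2‖)]
  have hπ₂_int : Integrable f π₂ := by
    by_cases hβ0 : β = 0
    · have hz : ρμ = 0 := Measure.measure_univ_eq_zero.1 (by rw [hmassμ, hβ0])
      have : π₂ = 0 := by rw [hπ₂, hz]; simp
      rw [this]
      exact integrable_zero_measure
    · rw [hπ₂]
      refine (integrable_smul_measure (by simp [hβ_top]) (by simp [hβ0])).2 hf_prod_int
  -- pointwise bound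
  set h₂f : E × E → ℝ := fun p => 4*R^2 + 4 * h₁ p.1 + 4 * h₁ p.2 with hh₂f
  have hpt : ∀ p : E × E, f p ≤ h₂f p := by
    rintro ⟨u, v⟩
    have h1 : ‖u - v‖ ≤ ‖u‖ + ‖v‖ := norm_sub_le _ _
    have h2 : 0 ≤ ‖u - v‖ := norm_nonneg _
    have h3 : 0 ≤ ‖u‖ := norm_nonneg _
    have h4 : 0 ≤ ‖v‖ := norm_nonneg _
    have hfv : f (u, v) = ‖u - v‖^2 := rfl
    have hhv : h₂f (u, v) = 4*R^2 + 4 * h₁ u + 4 * h₁ v := rfl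
    rw [hfv, hhv, hh₁]
    by_cases hu : u ∈ A <;> by_cases hv : v ∈ A
    · rw [Set.indicator_of_mem hu, Set.indicator_of_mem hv]
      nlinarith [pow_le_pow_left₀ h2 h1 2, sq_nonneg (‖u‖ - ‖v‖), sq_nonneg R]
    · rw [Set.indicator_of_mem hu, Set.indicator_of_notMem hv]
      have hv' : ¬ R < ‖v‖ := hv
      push_neg at hv'
      nlinarith [pow_le_pow_left₀ h2 h1 2, sq_nonneg (‖u‖ - ‖v‖),
        mul_self_le_mul_self h4 hv']
    · rw [Set.indicator_of_notMem hu, Set.indicator_of_mem hv]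
      have hu' : ¬ R < ‖u‖ := hu
      push_neg at hu'
      nlinarith [pow_le_pow_left₀ h2 h1 2, sq_nonneg (‖u‖ - ‖v‖),
        mul_self_le_mul_self h3 hu']
    · rw [Set.indicator_of_notMem hu, Set.indicator_of_notMem hv]
      have hu' : ¬ R < ‖u‖ := hu
      have hv' : ¬ R < ‖v‖ := hv
      push_neg at hu' hv'
      nlinarith [pow_le_pow_left₀ h2 h1 2, sq_nonneg (‖u‖ - ‖v‖),
        mul_self_le_mul_self h3 hu', mul_self_le_mul_self h4 hv']
  -- integrability of the bounding function on the product
  have hind : Integrable h₁ ρμ := hμρ.indicator hAmeas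
  have hind' : Integrable h₁ ρν := hνρ.indicator hAmeas
  have hT1 : Integrable (fun p : E × E => h₁ p.1) (ρμ.prod ρν) := by
    simpa using hind.mul_prod (integrable_const (1:ℝ))
  have hT2 : Integrable (fun p : E × E => h₁ p.2) (ρμ.prod ρν) := by
    simpa using (integrable_const (1:ℝ)).mul_prod hind'
  have hsplit : h₂f = fun p : E × E => 4*R^2 + (4 * h₁ p.1 + 4 * h₁ p.2) := by
    funext p; simp only [hh₂f]; ring
  have hh₂f_int : Integrable h₂f (ρμ.prod ρν) := by
    rw [hsplit]
    exact (integrable_const _).add ((hT1.const_mul 4).add (hT2.const_mul 4))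
  set b : ℝ := β.toReal with hb
  have hb_nonneg : 0 ≤ b := ENNReal.toReal_nonneg
  -- the value of ∫ h₂f over the product
  have hmass_prod : ((ρμ.prod ρν) Set.univ).toReal = b * b := by
    rw [← Set.univ_prod_univ, Measure.prod_prod, hmassμ, hmassν, ENNReal.toReal_mul]
  have hint1 : ∫ p, h₁ p.1 ∂(ρμ.prod ρν) = (∫ u, h₁ u ∂ρμ) * b := by
    have h1' := integral_prod_mul (μ := ρμ) (ν := ρν) h₁ (fun _ : E => (1:ℝ))
    simpa [measureReal_def, hmassν, ← hb] using h1'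
  have hint2 : ∫ p, h₁ p.2 ∂(ρμ.prod ρν) = b * (∫ v, h₁ v ∂ρν) := by
    have h2' := integral_prod_mul (μ := ρμ) (ν := ρν) (fun _ : E => (1:ℝ)) h₁
    simpa [measureReal_def, hmassμ, ← hb] using h2'
  have hIcalc : ∫ p, h₂f p ∂(ρμ.prod ρν)
      = (b*b) * (4*R^2) + 4 * ((∫ u, h₁ u ∂ρμ) * b) + 4 * (b * (∫ v, h₁ v ∂ρν)) := by
    have hsplit' : ∫ p, h₂f p ∂(ρμ.prod ρν)
        = ∫ p, (4*R^2 + (4 * h₁ p.1 + 4 * h₁ p.2)) ∂(ρμ.prod ρν) := by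
      congr 1
    have e1 := integral_add (μ := ρμ.prod ρν) (hT1.const_mul 4) (hT2.const_mul 4)
    have e2 := integral_add (μ := ρμ.prod ρν) (integrable_const (4*R^2))
      ((hT1.const_mul 4).add (hT2.const_mul 4))
    simp only [Pi.add_apply] at e1 e2
    rw [hsplit', e2, e1, integral_const_mul, integral_const_mul, integral_const_mul, hint1, hint2,
      integral_const, measureReal_def, hmass_prod, smul_eq_mul]
    ring
  -- bounds on the truncated integrals
  have hIμ' : ∫ u, h₁ u ∂ρμ ≤ ∫ u in A, ‖u‖^2 ∂μ := by
    rw [← integral_indicator hAmeas]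
    exact integral_mono_measure hρμ_le
      (Filter.Eventually.of_forall fun u => Set.indicator_nonneg (fun x _ => by positivity) u)
      (hμ.indicator hAmeas)
  have hIν' : ∫ v, h₁ v ∂ρν ≤ ∫ v in A, ‖v‖^2 ∂ν := by
    rw [← integral_indicator hAmeas]
    exact integral_mono_measure hρν_le
      (Filter.Eventually.of_forall fun u => Set.indicator_nonneg (fun x _ => by positivity) u)
      (hν.indicator hAmeas)
  have hIμ'_nonneg : 0 ≤ ∫ u, h₁ u ∂ρμ :=
    integral_nonneg fun u => Set.indicator_nonneg (fun x _ => by positivity) u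
  have hIν'_nonneg : 0 ≤ ∫ v, h₁ v ∂ρν :=
    integral_nonneg fun u => Set.indicator_nonneg (fun x _ => by positivity) u
  -- bound on b via tvDist
  have hb_tv : b ≤ tvDist μ ν := by
    have : b = (μ s).toReal - (ν s).toReal := by
      rw [hb, hβ, ENNReal.toReal_sub_of_le hνs_le (measure_ne_top μ s)]
    rw [this]
    exact le_trans (le_abs_self _) (aux_tv_bound μ ν hs)
  -- the value of the coupling integral, and the final bound
  have hπ₂_bound : ∫ p, f p ∂π₂ ≤ 4*R^2*b + 4 * (∫ u, h₁ u ∂ρμ) + 4 * (∫ v, h₁ v ∂ρν) := by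
    by_cases hβ0 : β = 0
    · have hz : ρμ = 0 := Measure.measure_univ_eq_zero.1 (by rw [hmassμ, hβ0])
      have hzz : π₂ = 0 := by rw [hπ₂, hz]; simp
      rw [hzz]
      simp only [integral_zero_measure]
      have hb0 : b = 0 := by rw [hb, hβ0]; simp
      nlinarith
    · have hbpos : 0 < b := ENNReal.toReal_pos hβ0 hβ_top
      have hmono : ∫ p, f p ∂(ρμ.prod ρν) ≤ ∫ p, h₂f p ∂(ρμ.prod ρν) :=
        integral_mono hf_prod_int hh₂f_int hpt
      have hcalc : ∫ p, f p ∂π₂ = b⁻¹ * ∫ p, f p ∂(ρμ.prod ρν) := by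
        rw [hπ₂, integral_smul_measure, smul_eq_mul, ENNReal.toReal_inv, hb]
      rw [hcalc]
      have step : b⁻¹ * ∫ p, f p ∂(ρμ.prod ρν) ≤ b⁻¹ * ∫ p, h₂f p ∂(ρμ.prod ρν) := by
        apply mul_le_mul_of_nonneg_left hmono (by positivity)
      refine le_trans step ?_
      rw [hIcalc]
      rw [mul_add, mul_add]
      have e1 : b⁻¹ * ((b*b) * (4*R^2)) = 4*R^2*b := by field_simp
      have e2 : b⁻¹ * (4 * ((∫ u, h₁ u ∂ρμ) * b)) = 4 * (∫ u, h₁ u ∂ρμ) := by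
        field_simp
      have e3 : b⁻¹ * (4 * (b * (∫ v, h₁ v ∂ρν))) = 4 * (∫ v, h₁ v ∂ρν) := by
        field_simp
      rw [e1, e2, e3]
  have hr : ∫ p, f p ∂π = ∫ p, f p ∂π₁ + ∫ p, f p ∂π₂ := by
    rw [hπdef]; exact integral_add_measure hπ₁_int hπ₂_int
  have hW : W2sq μ ν ≤ ∫ p, f p ∂π := aux_W2_le μ ν π hmarg1 hmarg2
  rw [hr, hπ₁_eq, zero_add] at hW
  refine le_trans hW (le_trans hπ₂_bound ?_)
  have hR2 : 0 < R^2 := by positivity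
  nlinarith [hIμ', hIν', hb_tv, htv0, hIμ'_nonneg, hIν'_nonneg]
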